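/- arXiv:1607.07748 — 2 statements merged into one kernel-verified Lean document; each statement's English description precedes it below -/
import Mathlib

section
/- Let X be a connected graph and let α, β: x → y be two paths with the same starting vertex x and the same ending vertex y. Then α and β are homologous if and only if c_α = c_β. -/
/-- A graph in the sense of Sunada's topological crystallography: a set of vertices,
a set of edges, source and target maps, and a fixed-point free involution sending
each edge to its inverse. -/
structure SunadaGraph where
  V : Type
  E : Type
  s : E → V
  t : E → V
  inv : E → E
  s_inv : ∀ e, s (inv e) = t e
  t_inv : ∀ e, t (inv e) = s e
  inv_inv : ∀ e, inv (inv e) = e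
  inv_ne : ∀ e, inv e ≠ e

namespace SunadaGraph

variable (X : SunadaGraph)

/-- `X.IsPath x y γ` : the word of edges `γ` is a path from `x` to `y` in `X`. -/
inductive IsPath : X.V → X.V → List X.E → Prop
  | nil (x : X.V) : IsPath x x []
  | cons (e : X.E) {y : X.V} {γ : List X.E} (h : IsPath (X.t e) y γ) :
      IsPath (X.s e) y (e :: γ)

/-- A graph is connected if any two vertices are joined by a path. -/
def Connected : Prop := ∀ x y : X.V, ∃ γ : List X.E, X.IsPath x y γ

/-- An edge is a bridge if there is no path from its target to its source
avoiding both the edge and its inverse. -/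
def IsBridge (e : X.E) : Prop :=
  ¬ ∃ γ : List X.E, X.IsPath (X.t e) (X.s e) γ ∧ e ∉ γ ∧ X.inv e ∉ γ

/-- The space `C₁(X,ℝ)` of real 1-chains: formal linear combinations of edges
with `e⁻¹ = -e`, realized as finitely supported functions `c : E → ℝ` with
`c(e⁻¹) = - c(e)`. -/
noncomputable def C1 : Submodule ℝ (X.E →₀ ℝ) where
  carrier := {c | ∀ e, c (X.inv e) = - c e}
  add_mem' := by
    intro a b ha hb e
    simp only [Finsupp.add_apply, ha e, hb e]
    ring
  zero_mem' := by intro e; simp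
  smul_mem' := by
    intro r c hc e
    simp only [Finsupp.smul_apply, hc e, smul_eq_mul]
    ring

/-- The 1-chain associated to a single edge. -/
noncomputable def edgeChain (e : X.E) : ↥X.C1 :=
  ⟨Finsupp.single e 1 - Finsupp.single (X.inv e) 1, by
    intro f
    classical
    have h1 : (e = X.inv f) ↔ (X.inv e = f) := by
      constructor
      · rintro rfl; exact X.inv_inv f
      · rintro rfl; exact (X.inv_inv e).symm
    have h2 : (X.inv e = X.inv f) ↔ (e = f) := by
      constructor
      · intro h
        have := congrArg X.inv h
        rwa [X.inv_inv, X.inv_inv] at this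
      · rintro rfl; rfl
    simp only [Finsupp.sub_apply, Finsupp.single_apply, h1, h2]
    ring⟩

/-- The 1-chain `c_γ` of a path `γ`. -/
noncomputable def pathChain (γ : List X.E) : ↥X.C1 := (γ.map X.edgeChain).sum

/-- The inner product on `C₁(X,ℝ)` for which the edges form an orthonormal basis
(with `e⁻¹` counting as the negative of `e`). -/
noncomputable def chainInner (c d : ↥X.C1) : ℝ :=
  (1/2) * ((c : X.E →₀ ℝ).sum fun e x => x * (d : X.E →₀ ℝ) e)

/-- The boundary of a 1-chain. -/
noncomputable def boundary (c : ↥X.C1) : X.V →₀ ℝ :=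
  (c : X.E →₀ ℝ).sum fun e x => x • (Finsupp.single (X.t e) (1:ℝ) - Finsupp.single (X.s e) 1)

/-- A 1-cycle is a 1-chain with vanishing boundary. -/
def IsCycle (c : ↥X.C1) : Prop := X.boundary c = 0

/-- An integral 1-chain: all coefficients are integers. -/
def IsIntegral (c : ↥X.C1) : Prop := ∀ e, ∃ n : ℤ, (c : X.E →₀ ℝ) e = (n : ℝ)

/-- The support of a 1-chain: the set of edges with positive coefficient. -/
def chainSupp (c : ↥X.C1) : Set X.E := {e | 0 < (c : X.E →₀ ℝ) e}

/-- `p` is the orthogonal projection of `C₁(X,ℝ)` onto the space `Z₁(X,ℝ)` of 1-cycles: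
it takes values in `Z₁(X,ℝ)` and `c - p c` is orthogonal to every 1-cycle. -/
def IsOrthoProj (p : ↥X.C1 → ↥X.C1) : Prop :=
  (∀ c, X.IsCycle (p c)) ∧ (∀ c z, X.IsCycle z → X.chainInner (c - p c) z = 0)

/-- Two paths from `x` to `y` are homologous if one can be obtained from the other
by repeatedly inserting or deleting subwords `e e⁻¹`, and/or replacing a subword
`στ` by `τσ` where `σ` and `τ` are loops based at the same vertex. -/
inductive Homologous : X.V → X.V → List X.E → List X.E → Prop
  | refl {x y : X.V} (γ : List X.E) (h : X.IsPath x y γ) : Homologous x y γ γ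
  | cancel {x y : X.V} (γ δ : List X.E) (e : X.E)
      (h : X.IsPath x y (γ ++ e :: X.inv e :: δ)) (h' : X.IsPath x y (γ ++ δ)) :
      Homologous x y (γ ++ e :: X.inv e :: δ) (γ ++ δ)
  | swap {x y : X.V} (γ σ τ δ : List X.E) (v : X.V)
      (hσ : X.IsPath v v σ) (hτ : X.IsPath v v τ)
      (h : X.IsPath x y (γ ++ (σ ++ (τ ++ δ))))
      (h' : X.IsPath x y (γ ++ (τ ++ (σ ++ δ)))) :
      Homologous x y (γ ++ (σ ++ (τ ++ δ))) (γ ++ (τ ++ (σ ++ δ)))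
  | symm {x y : X.V} {a b : List X.E} (h : Homologous x y a b) : Homologous x y b a
  | trans {x y : X.V} {a b c : List X.E} (h1 : Homologous x y a b)
      (h2 : Homologous x y b c) : Homologous x y a c

/-- A simple path: no vertex is visited twice. -/
def IsSimplePath (x y : X.V) (γ : List X.E) : Prop :=
  X.IsPath x y γ ∧ (x :: γ.map X.t).Nodup

/-- A simple loop based at `x`: a loop in which every vertex other than `x` occurs
at most once and `x` occurs only as the initial and final vertex. -/
def IsSimpleLoop (x : X.V) (γ : List X.E) : Prop :=
  X.IsPath x x γ ∧ (x :: (γ.map X.t).dropLast).Nodup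

/-- A reduced word: no subword of the form `e e⁻¹`. -/
def Reduced (γ : List X.E) : Prop := γ.Chain' (fun a b => b ≠ X.inv a)

/-- A spanning tree: a set of edges, closed under inversion, such that the spanning
subgraph it determines is connected and has no nonempty reduced loops. -/
def IsSpanningTree (S : Set X.E) : Prop :=
  (∀ e ∈ S, X.inv e ∈ S) ∧
  (∀ x y : X.V, ∃ γ : List X.E, X.IsPath x y γ ∧ ∀ e ∈ γ, e ∈ S) ∧
  (∀ (x : X.V) (γ : List X.E), X.IsPath x x γ → (∀ e ∈ γ, e ∈ S) → X.Reduced γ → γ = [])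

/-- The quotient of a set of 1-chains by the translation action of the
integral 1-cycles. -/
def transQuot (S : Set ↥X.C1) : Type :=
  Quot (fun a b : S => ∃ z : ↥X.C1, X.IsCycle z ∧ X.IsIntegral z ∧ (b : ↥X.C1) = (a : ↥X.C1) + z)

end SunadaGraph

namespace SunadaGraph

variable {X : SunadaGraph}

theorem IsPath.append {x y z : X.V} {a b : List X.E} (ha : X.IsPath x y a)
    (hb : X.IsPath y z b) : X.IsPath x z (a ++ b) := by
  induction ha with
  | nil => simpa
  | cons e h ih => exact IsPath.cons e (ih hb)

theorem edge_path (e : X.E) : X.IsPath (X.s e) (X.t e) [e] :=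
  IsPath.cons e (IsPath.nil _)

theorem inv_edge_path (e : X.E) : X.IsPath (X.t e) (X.s e) [X.inv e] := by
  have h := IsPath.cons (X := X) (X.inv e) (IsPath.nil (X.t (X.inv e)))
  rwa [X.s_inv, X.t_inv] at h

theorem Homologous.isPath {x y : X.V} {a b : List X.E} (h : X.Homologous x y a b) :
    X.IsPath x y a ∧ X.IsPath x y b := by
  induction h with
  | refl γ h => exact ⟨h, h⟩
  | cancel γ δ e h h' => exact ⟨h, h'⟩
  | swap _ _ _ _ _ _ _ h h' => exact ⟨h, h'⟩
  | symm _ ih => exact ⟨ih.2, ih.1⟩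
  | trans _ _ ih1 ih2 => exact ⟨ih1.1, ih2.2⟩

theorem Homologous.context {x y : X.V} {a b : List X.E} (h : X.Homologous x y a b) :
    ∀ {w z : X.V} {p q : List X.E}, X.IsPath w x p → X.IsPath y z q →
      X.Homologous w z (p ++ a ++ q) (p ++ b ++ q) := by
  induction h with
  | refl γ hγ =>
      intro w z p q hp hq
      exact Homologous.refl _ ((hp.append hγ).append hq)
  | cancel γ δ e h h' =>
      intro w z p q hp hq
      have h1 : X.IsPath w z ((p ++ γ) ++ (e :: X.inv e :: (δ ++ q))) := by
        have := (hp.append h).append hq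
        simpa [List.append_assoc] using this
      have h2 : X.IsPath w z ((p ++ γ) ++ (δ ++ q)) := by
        have := (hp.append h').append hq
        simpa [List.append_assoc] using this
      have := Homologous.cancel (X := X) (p ++ γ) (δ ++ q) e h1 h2
      simpa [List.append_assoc] using this
  | swap γ σ τ δ v hσ hτ h h' =>
      intro w z p q hp hq
      have h1 : X.IsPath w z ((p ++ γ) ++ (σ ++ (τ ++ (δ ++ q)))) := by
        have := (hp.append h).append hq
        simpa [List.append_assoc] using this
      have h2 : X.IsPath w z ((p ++ γ) ++ (τ ++ (σ ++ (δ ++ q)))) := by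
        have := (hp.append h').append hq
        simpa [List.append_assoc] using this
      have := Homologous.swap (X := X) (p ++ γ) σ τ (δ ++ q) v hσ hτ h1 h2
      simpa [List.append_assoc] using this
  | symm _ ih =>
      intro w z p q hp hq
      exact (ih hp hq).symm
  | trans _ _ ih1 ih2 =>
      intro w z p q hp hq
      exact (ih1 hp hq).trans (ih2 hp hq)

/-- The inverse (reversed) path. -/
def ipath (X : SunadaGraph) (γ : List X.E) : List X.E := (γ.map X.inv).reverse

@[simp] theorem ipath_nil : X.ipath [] = [] := rfl

@[simp] theorem ipath_cons (e : X.E) (γ : List X.E) :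
    X.ipath (e :: γ) = X.ipath γ ++ [X.inv e] := by
  simp [SunadaGraph.ipath]

@[simp] theorem ipath_ipath (γ : List X.E) : X.ipath (X.ipath γ) = γ := by
  simp [SunadaGraph.ipath, List.map_reverse, List.map_map, Function.comp_def, X.inv_inv]

theorem IsPath.ipath {x y : X.V} {γ : List X.E} (h : X.IsPath x y γ) :
    X.IsPath y x (X.ipath γ) := by
  induction h with
  | nil x => exact IsPath.nil x
  | cons e h ih =>
      rw [ipath_cons]
      exact ih.append (inv_edge_path e)

theorem homologous_pair (e : X.E) : X.Homologous (X.s e) (X.s e) [e, X.inv e] [] := by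
  have h1 : X.IsPath (X.s e) (X.s e) [e, X.inv e] :=
    (edge_path e).append (inv_edge_path e)
  have := Homologous.cancel (X := X) [] [] e h1 (IsPath.nil _)
  simpa using this

theorem homologous_append_ipath {x y : X.V} {γ : List X.E} (h : X.IsPath x y γ) :
    X.Homologous x x (γ ++ X.ipath γ) [] := by
  induction h with
  | nil x => exact Homologous.refl [] (IsPath.nil x)
  | @cons e y γ h ih =>
      have hstep := ih.context (edge_path e) (inv_edge_path e)
      -- [e] ++ (γ ++ ipath γ) ++ [inv e] ~ [e] ++ [] ++ [inv e]
      have hpair := (homologous_pair e).context (IsPath.nil (X.s e)) (IsPath.nil (X.s e))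
      have h2 : X.Homologous (X.s e) (X.s e) [e, X.inv e] [] := by
        simpa using hpair
      have hstep' : X.Homologous (X.s e) (X.s e) ((e :: γ) ++ X.ipath (e :: γ)) [e, X.inv e] := by
        simpa [List.append_assoc] using hstep
      exact hstep'.trans h2

theorem homologous_ipath_append {x y : X.V} {γ : List X.E} (h : X.IsPath x y γ) :
    X.Homologous y y (X.ipath γ ++ γ) [] := by
  have := homologous_append_ipath h.ipath
  rwa [ipath_ipath] at this

/-- The generator loop attached to an edge, relative to a system of paths `p`. -/
def gen (X : SunadaGraph) (p : X.V → List X.E) (e : X.E) : List X.E :=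
  p (X.s e) ++ [e] ++ X.ipath (p (X.t e))

def genList (X : SunadaGraph) (p : X.V → List X.E) : List X.E → List X.E
  | [] => []
  | e :: l => gen X p e ++ genList X p l

section Gen

variable {x : X.V} {p : X.V → List X.E}

theorem gen_isPath (hp : ∀ v, X.IsPath x v (p v)) (e : X.E) : X.IsPath x x (gen X p e) :=
  ((hp _).append (edge_path e)).append (hp (X.t e)).ipath

theorem genList_isPath (hp : ∀ v, X.IsPath x v (p v)) (l : List X.E) : X.IsPath x x (genList X p l) := by
  induction l with
  | nil => exact IsPath.nil x
  | cons e l ih => exact (gen_isPath hp e).append ih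

theorem path_hom_gen (hp : ∀ v, X.IsPath x v (p v)) : ∀ {v y : X.V} {γ : List X.E}, X.IsPath v y γ →
    X.Homologous x y (p v ++ γ) (genList X p γ ++ p y) := by
  intro v y γ h
  induction h with
  | nil v => simpa [genList] using Homologous.refl (p v) (hp v)
  | @cons e y γ h ih =>
      have hloop := (homologous_ipath_append (hp (X.t e))).symm
      have hpre : X.IsPath x (X.t e) (p (X.s e) ++ [e]) := (hp _).append (edge_path e)
      have hins := hloop.context hpre h
      -- : x→y : (p(se)++[e]) ++ [] ++ γ ~ (p(se)++[e]) ++ (ipath(p te) ++ p te) ++ γ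
      have hctx := ih.context (gen_isPath hp e) (IsPath.nil y)
      refine Homologous.trans (by simpa [List.append_assoc] using hins) ?_
      simpa [gen, genList, List.append_assoc] using hctx

theorem gen_pair (hp : ∀ v, X.IsPath x v (p v)) (e : X.E) :
    X.Homologous x x (gen X p e ++ gen X p (X.inv e)) [] := by
  have step1 := (homologous_ipath_append (hp (X.t e))).context
      ((hp _).append (edge_path e))
      ((inv_edge_path e).append (hp (X.s e)).ipath)
  -- (p(se)++[e]) ++ (ipath(p te)++p te) ++ ([inv e]++ipath(p se)) ~ (p(se)++[e]) ++ [] ++ ([inv e]++ipath(p se))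
  have step2 := (homologous_pair e).context (hp (X.s e)) ((hp (X.s e)).ipath)
  -- p(se) ++ [e,inv e] ++ ipath(p se) ~ p(se) ++ [] ++ ipath(p se)
  have step3 := homologous_append_ipath (hp (X.s e))
  have e1 : gen X p e ++ gen X p (X.inv e)
      = (p (X.s e) ++ [e]) ++ ((X.ipath (p (X.t e)) ++ p (X.t e)) ++ ([X.inv e] ++ X.ipath (p (X.s e)))) := by
    simp [gen, X.s_inv, X.t_inv, List.append_assoc]
  rw [e1]
  refine Homologous.trans (by simpa [List.append_assoc] using step1) ?_
  refine Homologous.trans (by simpa [List.append_assoc] using step2) ?_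
  simpa using step3

theorem genList_mem_extract [DecidableEq X.E] (hp : ∀ v, X.IsPath x v (p v)) {f : X.E} :
    ∀ {l : List X.E}, f ∈ l →
      X.Homologous x x (genList X p l) (gen X p f ++ genList X p (l.erase f)) := by
  intro l hf
  induction l with
  | nil => simp at hf
  | cons e l ih =>
      by_cases hef : e = f
      · subst hef
        simp only [List.erase_cons_head]
        exact Homologous.refl _ (genList_isPath hp _)
      · have hfl : f ∈ l := by
          rcases List.mem_cons.mp hf with h | h
          · exact absurd h.symm hef
          · exact h
        have ihh := (ih hfl).context (gen_isPath hp e) (IsPath.nil x)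
        have hswap := Homologous.swap (X := X) [] (gen X p e) (gen X p f)
            (genList X p (l.erase f)) x (gen_isPath hp e) (gen_isPath hp f)
            (by simpa using ((gen_isPath hp e).append
              ((gen_isPath hp f).append (genList_isPath hp _))))
            (by simpa using ((gen_isPath hp f).append
              ((gen_isPath hp e).append (genList_isPath hp _))))
        have herase : (e :: l).erase f = e :: l.erase f := List.erase_cons_tail (by
          simpa using hef)
        rw [herase]
        show X.Homologous x x (gen X p e ++ genList X p l)
          (gen X p f ++ (gen X p e ++ genList X p (l.erase f)))
        refine Homologous.trans (by simpa [List.append_assoc] using ihh) ?_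
        simpa [List.append_assoc] using hswap

theorem genList_hom_nil [DecidableEq X.E] (hp : ∀ v, X.IsPath x v (p v)) :
    ∀ (l : List X.E), (∀ f, l.count f = l.count (X.inv f)) →
      X.Homologous x x (genList X p l) [] := by
  suffices H : ∀ (n : ℕ) (l : List X.E), l.length = n →
      (∀ f, l.count f = l.count (X.inv f)) → X.Homologous x x (genList X p l) [] by
    exact fun l => H l.length l rfl
  intro n
  induction n using Nat.strong_induction_on with
  | _ n ih =>
  intro l hn hcount
  match l, hn with
  | [], _ => exact Homologous.refl [] (IsPath.nil x)
  | e :: l, hn =>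
      have hmem : X.inv e ∈ l := by
        have h1 := hcount e
        have hne : X.inv e ≠ e := X.inv_ne e
        have c1 : (e :: l).count e = l.count e + 1 := by
          rw [List.count_cons, if_pos (by simp)]
        have c2 : (e :: l).count (X.inv e) = l.count (X.inv e) + 0 := by
          rw [List.count_cons, if_neg (by simpa using fun h : e = X.inv e => hne h.symm)]
        rw [c1, c2] at h1
        have hpos : 0 < l.count (X.inv e) := by omega
        exact List.count_pos_iff.mp hpos
      have hext := genList_mem_extract hp (f := X.inv e) hmem
      set l' := l.erase (X.inv e) with hl'
      have hcount' : ∀ f, l'.count f = l'.count (X.inv f) := by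
        intro f
        have hinj : ∀ a b : X.E, X.inv a = X.inv b → a = b := by
          intro a b h
          have := congrArg X.inv h
          rwa [X.inv_inv, X.inv_inv] at this
        have hiff1 : (X.inv e = X.inv f) ↔ (e = f) :=
          ⟨fun h => hinj _ _ h, fun h => by rw [h]⟩
        have hiff2 : (e = X.inv f) ↔ (X.inv e = f) :=
          ⟨fun h => by rw [h, X.inv_inv], fun h => by rw [← h, X.inv_inv]⟩
        have h2 : l'.count f = l.count f - if X.inv e = f then 1 else 0 := by
          rw [hl', List.count_erase]; simp
        have h3 : l'.count (X.inv f) = l.count (X.inv f) - if X.inv e = X.inv f then 1 else 0 := by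
          rw [hl', List.count_erase]; simp
        have h1 := hcount f
        rw [List.count_cons, List.count_cons] at h1
        simp only [beq_iff_eq] at h1
        have hposl : 0 < l.count (X.inv e) := List.count_pos_iff.mpr hmem
        rw [h2, h3]
        by_cases hfe : e = f
        · have hnf : ¬ (X.inv e = f) := fun h => X.inv_ne e (h.trans hfe.symm)
          rw [if_neg hnf, if_pos (hiff1.mpr hfe)]
          rw [if_pos hfe, if_neg (fun h => hnf (hiff2.mp h))] at h1
          have hfe' : f = e := hfe.symm
          subst hfe'
          omega
        · by_cases hfie : X.inv e = f
          · rw [if_pos hfie, if_neg (fun h => hfe (hiff1.mp h))]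
            rw [if_neg hfe, if_pos (hiff2.mpr hfie)] at h1
            have hfie' : f = X.inv e := hfie.symm
            subst hfie'
            omega
          · rw [if_neg hfie, if_neg (fun h => hfe (hiff1.mp h))]
            rw [if_neg hfe, if_neg (fun h => hfie (hiff2.mp h))] at h1
            omega
      have hlen : l'.length < n := by
        have hle := List.length_erase_of_mem hmem
        rw [← hl'] at hle
        simp only [List.length_cons] at hn
        omega
      have ihl' := ih l'.length hlen l' rfl hcount'
      -- genList (e :: l) = gen e ++ genList l ~ gen e ++ (gen ē ++ genList l') ~ genList l' ~ []
      have h1 := hext.context (gen_isPath hp e) (IsPath.nil x)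
      have h2 := (gen_pair hp e).context (IsPath.nil x) (genList_isPath hp l')
      have h3 := ihl'
      show X.Homologous x x (gen X p e ++ genList X p l) []
      refine Homologous.trans (by simpa [List.append_assoc] using h1) ?_
      refine Homologous.trans ?_ h3
      simpa [List.append_assoc] using h2

end Gen

theorem pathChain_nil : X.pathChain [] = 0 := rfl

theorem pathChain_cons (e : X.E) (γ : List X.E) :
    X.pathChain (e :: γ) = X.edgeChain e + X.pathChain γ := by
  simp [pathChain]

theorem pathChain_append (a b : List X.E) :
    X.pathChain (a ++ b) = X.pathChain a + X.pathChain b := by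
  simp [pathChain]

theorem edgeChain_inv (e : X.E) : X.edgeChain (X.inv e) = - X.edgeChain e := by
  apply Subtype.ext
  show (Finsupp.single (X.inv e) 1 - Finsupp.single (X.inv (X.inv e)) 1 : X.E →₀ ℝ)
      = -(Finsupp.single e 1 - Finsupp.single (X.inv e) 1)
  rw [X.inv_inv]
  abel

theorem pathChain_ipath (γ : List X.E) : X.pathChain (X.ipath γ) = - X.pathChain γ := by
  induction γ with
  | nil =>
      rw [ipath_nil, pathChain_nil]
      abel
  | cons e γ ih =>
      rw [ipath_cons, pathChain_append, pathChain_cons, ih, pathChain_cons,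
        pathChain_nil, edgeChain_inv]
      abel

theorem Homologous.pathChain_eq {x y : X.V} {a b : List X.E} (h : X.Homologous x y a b) :
    X.pathChain a = X.pathChain b := by
  induction h with
  | refl => rfl
  | cancel γ δ e _ _ =>
      rw [pathChain_append, pathChain_append, pathChain_cons, pathChain_cons, edgeChain_inv]
      abel
  | swap γ σ τ δ v _ _ _ _ =>
      simp only [pathChain_append]
      abel
  | symm _ ih => exact ih.symm
  | trans _ _ ih1 ih2 => exact ih1.trans ih2

theorem pathChain_coeff [DecidableEq X.E] (γ : List X.E) (f : X.E) :
    ((X.pathChain γ : X.E →₀ ℝ)) f = (γ.count f : ℝ) - (γ.count (X.inv f) : ℝ) := by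
  induction γ with
  | nil => simp [pathChain_nil]
  | cons e γ ih =>
      have hco : ((X.pathChain (e :: γ) : X.E →₀ ℝ)) f
          = ((X.edgeChain e : X.E →₀ ℝ)) f + ((X.pathChain γ : X.E →₀ ℝ)) f := by
        rw [pathChain_cons]; rfl
      rw [hco, ih]
      have hec : ((X.edgeChain e : X.E →₀ ℝ)) f
          = (if e = f then (1:ℝ) else 0) - (if X.inv e = f then (1:ℝ) else 0) := by
        show ((Finsupp.single e 1 - Finsupp.single (X.inv e) 1 : X.E →₀ ℝ)) f = _
        simp [Finsupp.single_apply]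
      rw [hec]
      have hiff : X.inv e = f ↔ e = X.inv f := by
        constructor
        · rintro rfl; exact (X.inv_inv e).symm
        · rintro rfl; exact X.inv_inv f
      rw [List.count_cons, List.count_cons]
      simp only [beq_iff_eq]
      by_cases h1 : e = f
      · subst h1
        rw [if_pos rfl, if_neg (X.inv_ne e)]
        rw [if_pos rfl, if_neg (fun h : e = X.inv e => X.inv_ne e h.symm)]
        push_cast; ring
      · rw [if_neg h1, if_neg (fun h => h1 h)]
        by_cases h2 : X.inv e = f
        · rw [if_pos h2, if_pos (hiff.mp h2)]
          push_cast; ring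
        · rw [if_neg h2, if_neg (fun h => h2 (hiff.mpr h))]
          push_cast; ring

end SunadaGraph


/-- Lemma: homologous iff equal 1-chains.  In a connected graph,
two paths `α β : x → y` are homologous if and only if `c_α = c_β`. -/
theorem homologous_iff_pathChain_eq (X : SunadaGraph) (hconn : X.Connected)
    (x y : X.V) (α β : List X.E) (hα : X.IsPath x y α) (hβ : X.IsPath x y β) :
    X.Homologous x y α β ↔ X.pathChain α = X.pathChain β := by
  classical
  constructor
  · exact fun h => h.pathChain_eq
  · intro hc
    set p : X.V → List X.E := fun v =>
      if h : v = x then [] else Classical.choose (hconn x v) with hpdef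
    have hpx : p x = [] := by simp [hpdef]
    have hp : ∀ v, X.IsPath x v (p v) := by
      intro v
      by_cases h : v = x
      · subst h; rw [hpx]; exact SunadaGraph.IsPath.nil _
      · rw [hpdef]; simp only [h, dif_neg, not_false_iff]
        exact Classical.choose_spec (hconn x v)
    have hloop : X.IsPath x x (α ++ X.ipath β) := hα.append hβ.ipath
    have hzero : X.pathChain (α ++ X.ipath β) = 0 := by
      rw [SunadaGraph.pathChain_append, SunadaGraph.pathChain_ipath, hc]
      abel
    have hcount : ∀ f, (α ++ X.ipath β).count f = (α ++ X.ipath β).count (X.inv f) := by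
      intro f
      have h1 : ((X.pathChain (α ++ X.ipath β) : X.E →₀ ℝ)) f = 0 := by
        rw [hzero]; rfl
      rw [SunadaGraph.pathChain_coeff] at h1
      have : ((α ++ X.ipath β).count f : ℝ) = ((α ++ X.ipath β).count (X.inv f) : ℝ) := by
        linarith
      exact_mod_cast this
    -- core: the loop is homologous to []
    have hcore : X.Homologous x x (α ++ X.ipath β) [] := by
      have h1 := SunadaGraph.path_hom_gen hp hloop
      rw [hpx] at h1
      have h2 := SunadaGraph.genList_hom_nil hp (α ++ X.ipath β) hcount
      have h1' : X.Homologous x x (α ++ X.ipath β) (X.genList p (α ++ X.ipath β)) := by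
        simpa using h1
      exact h1'.trans h2
    -- α ~ α ++ (ipath β ++ β) ~ β
    have h2 : X.Homologous y y (X.ipath β ++ β) [] := SunadaGraph.homologous_ipath_append hβ
    have h3 := h2.symm.context hα (SunadaGraph.IsPath.nil y)
    -- : Homologous x y (α ++ [] ++ []) (α ++ (ipath β ++ β) ++ [])
    have h4 := hcore.context (SunadaGraph.IsPath.nil x) hβ
    -- : Homologous x y ([] ++ (α ++ ipath β) ++ β) ([] ++ [] ++ β)
    refine SunadaGraph.Homologous.trans (by simpa using h3) ?_
    simpa [List.append_assoc] using h4
end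

section
/- Let X be any graph and let c be an integral 1-cycle on X. Then there exist n ≥ 0 and simple loops σ₁, …, σₙ in X with supp(c_{σᵢ}) ⊆ supp(c) for each i, such that c = c_{σ₁} + ⋯ + c_{σₙ}. -/
namespace SunadaGraph

variable (X : SunadaGraph)

open scoped Classical

lemma C1_inv_apply (c : ↥X.C1) (e : X.E) : (c : X.E →₀ ℝ) (X.inv e) = - (c : X.E →₀ ℝ) e :=
  c.2 e

lemma edgeChain_apply (e f : X.E) :
    ((X.edgeChain e : ↥X.C1) : X.E →₀ ℝ) f =
      (if e = f then (1:ℝ) else 0) - (if X.inv e = f then 1 else 0) := by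
  classical
  simp [edgeChain, Finsupp.single_apply]

lemma pathChain_coe (γ : List X.E) :
    ((X.pathChain γ : ↥X.C1) : X.E →₀ ℝ) = (γ.map (fun e => ((X.edgeChain e : ↥X.C1) : X.E →₀ ℝ))).sum := by
  classical
  induction γ with
  | nil => simp [pathChain]
  | cons e γ ih =>
      simp only [pathChain, List.map_cons, List.sum_cons] at *
      rw [Submodule.coe_add, ih]

lemma pathChain_apply (γ : List X.E) (f : X.E) :
    ((X.pathChain γ : ↥X.C1) : X.E →₀ ℝ) f = (γ.count f : ℝ) - (γ.count (X.inv f) : ℝ) := by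
  classical
  induction γ with
  | nil => simp [pathChain]
  | cons e γ ih =>
      have : ((X.pathChain (e :: γ) : ↥X.C1) : X.E →₀ ℝ) = ((X.edgeChain e : ↥X.C1) : X.E →₀ ℝ) + ((X.pathChain γ : ↥X.C1) : X.E →₀ ℝ) := by
        simp only [pathChain, List.map_cons, List.sum_cons]
        rw [Submodule.coe_add]
      rw [this]
      have h1 : (X.inv e = f) ↔ (e = X.inv f) := by
        constructor
        · rintro rfl; exact (X.inv_inv e).symm
        · rintro rfl; exact X.inv_inv f
      simp only [Finsupp.add_apply, ih, X.edgeChain_apply, List.count_cons, beq_iff_eq, h1]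
      by_cases h2 : e = f <;> by_cases h3 : e = X.inv f <;>
        simp only [h2, h3, if_true, if_false, if_pos, if_neg, Nat.cast_add, Nat.cast_ite,
          Nat.cast_one, Nat.cast_zero] <;> ring

lemma boundary_sub (a b : ↥X.C1) : X.boundary (a - b) = X.boundary a - X.boundary b := by
  classical
  unfold boundary
  rw [AddSubgroupClass.coe_sub]
  exact Finsupp.sum_sub_index (fun e h1 h2 => by rw [sub_smul])

lemma boundary_add (a b : ↥X.C1) : X.boundary (a + b) = X.boundary a + X.boundary b := by
  classical
  unfold boundary
  rw [Submodule.coe_add]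
  exact Finsupp.sum_add_index (fun a _ => by simp) (fun a _ b1 b2 => by rw [add_smul])

lemma boundary_edgeChain (e : X.E) :
    X.boundary (X.edgeChain e) =
      (2:ℝ) • (Finsupp.single (X.t e) (1:ℝ)) - (2:ℝ) • (Finsupp.single (X.s e) (1:ℝ)) := by
  classical
  have hcoe : ((X.edgeChain e : ↥X.C1) : X.E →₀ ℝ) =
      Finsupp.single e 1 + Finsupp.single (X.inv e) (-1) := by
    simp [edgeChain, sub_eq_add_neg, Finsupp.single_neg]
  unfold boundary
  rw [hcoe, Finsupp.sum_add_index (fun a _ => by simp) (fun a _ b1 b2 => by rw [add_smul]),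
    Finsupp.sum_single_index (by simp), Finsupp.sum_single_index (by simp),
    X.s_inv, X.t_inv]
  simp only [one_smul, neg_one_smul]
  rw [two_smul, two_smul]
  abel

lemma boundary_pathChain {x y : X.V} {γ : List X.E} (h : X.IsPath x y γ) :
    X.boundary (X.pathChain γ) =
      (2:ℝ) • (Finsupp.single y (1:ℝ)) - (2:ℝ) • (Finsupp.single x (1:ℝ)) := by
  classical
  induction h with
  | nil x =>
      have h0 : X.pathChain [] = 0 := by simp [pathChain]
      rw [h0]
      unfold boundary
      simp
  | cons e h ih =>
      rename_i y' γ'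
      have hsplit : X.pathChain (e :: γ') = X.edgeChain e + X.pathChain γ' := by
        apply Subtype.ext
        simp only [pathChain, List.map_cons, List.sum_cons]
      rw [hsplit, X.boundary_add, X.boundary_edgeChain, ih]
      abel

lemma boundary_loop {x : X.V} {γ : List X.E} (h : X.IsPath x x γ) :
    X.IsCycle (X.pathChain γ) := by
  unfold IsCycle
  rw [X.boundary_pathChain h, sub_self]

lemma sum_source_eq_zero (c : ↥X.C1) (hcyc : X.IsCycle c) (v : X.V) :
    ∑ e ∈ (c : X.E →₀ ℝ).support.filter (fun e => X.s e = v), (c : X.E →₀ ℝ) e = 0 := by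
  classical
  set S := (c : X.E →₀ ℝ).support with hS
  have h0 : (X.boundary c) v = 0 := by rw [hcyc]; simp
  have h1 : ∑ e ∈ S, (c : X.E →₀ ℝ) e *
      ((if X.t e = v then (1:ℝ) else 0) - (if X.s e = v then 1 else 0)) = (X.boundary c) v := by
    unfold boundary
    rw [Finsupp.sum_apply]
    unfold Finsupp.sum
    apply Finset.sum_congr rfl
    intro e _
    simp only [Finsupp.smul_apply, Finsupp.sub_apply, smul_eq_mul, Finsupp.single_apply]
  rw [h0] at h1
  have hmem : ∀ e, e ∈ S ↔ X.inv e ∈ S := by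
    intro e
    simp only [hS, Finsupp.mem_support_iff, X.C1_inv_apply, ne_eq, neg_eq_zero]
  have h2 : ∑ e ∈ S, (c : X.E →₀ ℝ) e * (if X.t e = v then (1:ℝ) else 0)
      = ∑ e ∈ S, (- ((c : X.E →₀ ℝ) e)) * (if X.s e = v then (1:ℝ) else 0) := by
    apply Finset.sum_nbij' (i := X.inv) (j := X.inv)
    · intro a ha; exact (hmem a).1 ha
    · intro a ha; rw [hmem]; rwa [X.inv_inv]
    · intro a _; exact X.inv_inv a
    · intro a _; exact X.inv_inv a
    · intro a _
      rw [X.C1_inv_apply, X.s_inv, neg_neg]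
  have h3 : ∑ e ∈ S, (c : X.E →₀ ℝ) e * (if X.s e = v then (1:ℝ) else 0) = 0 := by
    have := h1
    simp only [mul_sub, Finset.sum_sub_distrib] at this
    rw [h2] at this
    simp only [neg_mul, Finset.sum_neg_distrib] at this
    linarith
  have h4 : ∑ e ∈ S.filter (fun e => X.s e = v), (c : X.E →₀ ℝ) e
      = ∑ e ∈ S, (c : X.E →₀ ℝ) e * (if X.s e = v then (1:ℝ) else 0) := by
    rw [Finset.sum_filter]
    apply Finset.sum_congr rfl
    intro e _
    by_cases h : X.s e = v <;> simp [h]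
  rw [h4, h3]

lemma exists_next (c : ↥X.C1) (hcyc : X.IsCycle c) {e0 : X.E}
    (he0 : 0 < (c : X.E →₀ ℝ) e0) :
    ∃ f, 0 < (c : X.E →₀ ℝ) f ∧ X.s f = X.t e0 := by
  classical
  set v := X.t e0
  set S := (c : X.E →₀ ℝ).support.filter (fun e => X.s e = v) with hS
  have hsum := X.sum_source_eq_zero c hcyc v
  by_contra hcon
  push_neg at hcon
  have hmem : X.inv e0 ∈ S := by
    rw [hS, Finset.mem_filter, Finsupp.mem_support_iff, X.C1_inv_apply, X.s_inv]
    constructor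
    · intro h; rw [neg_eq_zero] at h; exact absurd h (ne_of_gt he0)
    · rfl
  have hneg : (c : X.E →₀ ℝ) (X.inv e0) < 0 := by
    rw [X.C1_inv_apply]; linarith
  have hrest : ∑ e ∈ S.erase (X.inv e0), (c : X.E →₀ ℝ) e ≤ 0 := by
    apply Finset.sum_nonpos
    intro f hf
    rw [Finset.mem_erase, hS, Finset.mem_filter] at hf
    by_contra hpos
    push_neg at hpos
    exact absurd hf.2.2 (hcon f hpos)
  have := Finset.sum_erase_add S (fun e => (c : X.E →₀ ℝ) e) hmem
  rw [hsum] at this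
  linarith

lemma isPath_append {x m y : X.V} {a b : List X.E}
    (h1 : X.IsPath x m a) (h2 : X.IsPath m y b) : X.IsPath x y (a ++ b) := by
  induction h1 with
  | nil _ => simpa using h2
  | cons e h ih => exact IsPath.cons e (ih h2)

lemma isPath_split {x y : X.V} {a b : List X.E}
    (h : X.IsPath x y (a ++ b)) : ∃ m, X.IsPath x m a ∧ X.IsPath m y b := by
  induction a generalizing x with
  | nil => exact ⟨x, IsPath.nil x, by simpa using h⟩
  | cons e a ih =>
      cases h with
      | cons e h =>
          obtain ⟨m, hm1, hm2⟩ := ih h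
          exact ⟨m, IsPath.cons e hm1, hm2⟩

lemma isPath_nil_eq {a b : X.V} (h : X.IsPath a b []) : a = b := by
  cases h; rfl

lemma isPath_singleton {m y : X.V} {f : X.E} (h : X.IsPath m y [f]) :
    m = X.s f ∧ y = X.t f := by
  cases h with
  | cons e h => exact ⟨rfl, (X.isPath_nil_eq h).symm⟩

lemma isPath_map_s {x y : X.V} {γ : List X.E} (h : X.IsPath x y γ) :
    γ.map X.s = (x :: γ.map X.t).dropLast := by
  induction h with
  | nil _ => simp
  | cons e h ih =>
      rename_i y' γ'
      simp only [List.map_cons]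
      rw [List.dropLast_cons₂, ← ih]

lemma isPath_end_mem {x y : X.V} {γ : List X.E} (h : X.IsPath x y γ) (hne : γ ≠ []) :
    y ∈ γ.map X.t := by
  induction h with
  | nil _ => exact absurd rfl hne
  | cons e h ih =>
      rename_i y' γ'
      cases γ' with
      | nil =>
          have := X.isPath_nil_eq h
          simp [← this]
      | cons f δ =>
          have hmem := ih (by simp)
          simp only [List.map_cons, List.mem_cons] at *
          tauto

lemma exists_simple_loop (c : ↥X.C1) (hcyc : X.IsCycle c) {e0 : X.E}
    (he0 : 0 < (c : X.E →₀ ℝ) e0) :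
    ∃ (x : X.V) (γ : List X.E), X.IsSimpleLoop x γ ∧ γ ≠ [] ∧
      ∀ f ∈ γ, 0 < (c : X.E →₀ ℝ) f := by
  classical
  set P : X.E → Prop := fun e => 0 < (c : X.E →₀ ℝ) e with hP
  have key : ∀ n : ℕ,
      (∃ x γ, X.IsSimpleLoop x γ ∧ γ ≠ [] ∧ ∀ f ∈ γ, P f) ∨
      (∃ x y γ, X.IsPath x y γ ∧ (x :: γ.map X.t).Nodup ∧ (∀ f ∈ γ, P f) ∧
        γ.length = n ∧ ∃ e, P e ∧ X.t e = y) := by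
    intro n
    induction n with
    | zero =>
        right
        exact ⟨X.t e0, X.t e0, [], IsPath.nil _, by simp, by simp, rfl, e0, he0, rfl⟩
    | succ n ih =>
        rcases ih with h | ⟨x, y, γ, hpath, hnd, hPedges, hlen, e, hPe, hte⟩
        · left; exact h
        · obtain ⟨f, hPf, hsf⟩ := X.exists_next c hcyc hPe
          rw [hte] at hsf
          have hpathf : X.IsPath y (X.t f) [f] := by
            rw [← hsf]; exact IsPath.cons f (IsPath.nil _)
          have hpath' : X.IsPath x (X.t f) (γ ++ [f]) := X.isPath_append hpath hpathf
          by_cases hmem : X.t f ∈ x :: γ.map X.t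
          · left
            rcases List.mem_cons.1 hmem with hx | hmem'
            · refine ⟨x, γ ++ [f], ⟨by rw [hx] at hpath'; exact hpath', ?_⟩, by simp, ?_⟩
              · rw [List.map_append]
                simp only [List.map_cons, List.map_nil, List.dropLast_concat]
                exact hnd
              · intro g hg
                rcases List.mem_append.1 hg with h' | h'
                · exact hPedges g h'
                · simp only [List.mem_singleton] at h'; rw [h']; exact hPf
            · obtain ⟨g, hgγ, hg⟩ := List.mem_map.1 hmem'
              obtain ⟨δ₁, δ₂, rfl⟩ := List.append_of_mem hgγ
              obtain ⟨m, h1, h2⟩ := X.isPath_split hpath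
              cases h2 with
              | cons _ h2' =>
                have hloop : X.IsPath (X.t g) (X.t g) (δ₂ ++ [f]) := by
                  have := X.isPath_append h2' hpathf
                  rwa [← hg] at this
                refine ⟨X.t g, δ₂ ++ [f], ⟨hloop, ?_⟩, by simp, ?_⟩
                · rw [List.map_append]
                  simp only [List.map_cons, List.map_nil, List.dropLast_concat]
                  have hsub : (X.t g :: δ₂.map X.t).Sublist (x :: (δ₁ ++ g :: δ₂).map X.t) := by
                    rw [List.map_append, List.map_cons]
                    exact (List.sublist_append_right _ _).cons x
                  exact hnd.sublist hsub
                · intro a ha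
                  rcases List.mem_append.1 ha with h' | h'
                  · exact hPedges a (by simp [h'])
                  · simp only [List.mem_singleton] at h'; rw [h']; exact hPf
          · right
            refine ⟨x, X.t f, γ ++ [f], hpath', ?_, ?_, by simp [hlen], f, hPf, rfl⟩
            · have : (x :: (γ ++ [f]).map X.t) = (x :: γ.map X.t) ++ [X.t f] := by
                simp [List.map_append]
              rw [this, List.nodup_append']
              refine ⟨hnd, List.nodup_singleton _, ?_⟩
              intro a ha hb
              simp only [List.mem_singleton] at hb
              rw [hb] at ha
              exact hmem ha
            · intro g hg
              rcases List.mem_append.1 hg with h' | h'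
              · exact hPedges g h'
              · simp only [List.mem_singleton] at h'; rw [h']; exact hPf
  rcases key ((c : X.E →₀ ℝ).support.card + 1) with h | ⟨x, y, γ, hpath, hnd, hPedges, hlen, _⟩
  · exact h
  · exfalso
    have hndγ : γ.Nodup := (hnd.of_cons).of_map
    have hsub : γ.toFinset ⊆ (c : X.E →₀ ℝ).support := by
      intro a ha
      rw [List.mem_toFinset] at ha
      rw [Finsupp.mem_support_iff]
      exact ne_of_gt (hPedges a ha)
    have hcard := Finset.card_le_card hsub
    rw [List.toFinset_card_of_nodup hndγ, hlen] at hcard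
    omega

lemma simpleLoop_edges_nodup {x : X.V} {γ : List X.E} (h : X.IsSimpleLoop x γ) :
    γ.Nodup := by
  obtain ⟨hp, hnd⟩ := h
  cases γ with
  | nil => exact List.nodup_nil
  | cons e δ =>
      have hmap := X.isPath_map_s hp
      have hddl : (x :: (e :: δ).map X.t).dropLast = x :: ((e :: δ).map X.t).dropLast := by
        rw [List.dropLast_cons_of_ne_nil]
        simp
      rw [hddl] at hmap
      have : ((e :: δ).map X.s).Nodup := by rw [hmap]; exact hnd
      exact this.of_map

lemma pathChain_apply_nodup {γ : List X.E} (hnd : γ.Nodup)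
    (hninv : ∀ f ∈ γ, X.inv f ∉ γ) (e : X.E) :
    ((X.pathChain γ : ↥X.C1) : X.E →₀ ℝ) e =
      if e ∈ γ then 1 else if X.inv e ∈ γ then -1 else 0 := by
  classical
  rw [X.pathChain_apply]
  by_cases h1 : e ∈ γ
  · have h2 : X.inv e ∉ γ := hninv e h1
    rw [List.count_eq_one_of_mem hnd h1, List.count_eq_zero_of_not_mem h2, if_pos h1]
    norm_num
  · by_cases h2 : X.inv e ∈ γ
    · rw [List.count_eq_zero_of_not_mem h1, List.count_eq_one_of_mem hnd h2, if_neg h1, if_pos h2]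
      norm_num
    · rw [List.count_eq_zero_of_not_mem h1, List.count_eq_zero_of_not_mem h2, if_neg h1, if_neg h2]
      norm_num

lemma zero_decomposition (c : ↥X.C1) (hc : c = 0) :
    ∃ (n : ℕ) (v : Fin n → X.V) (σ : Fin n → List X.E),
      (∀ i, X.IsSimpleLoop (v i) (σ i)) ∧
      (∀ i, X.chainSupp (X.pathChain (σ i)) ⊆ X.chainSupp c) ∧
      c = ∑ i, X.pathChain (σ i) := by
  exact ⟨0, Fin.elim0, Fin.elim0, fun i => i.elim0, fun i => i.elim0, by simp [hc]⟩

lemma main_induction : ∀ (N : ℕ) (c : ↥X.C1), X.IsCycle c → X.IsIntegral c →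
    (∑ e ∈ (c : X.E →₀ ℝ).support, |(c : X.E →₀ ℝ) e|) ≤ (N : ℝ) →
    ∃ (n : ℕ) (v : Fin n → X.V) (σ : Fin n → List X.E),
      (∀ i, X.IsSimpleLoop (v i) (σ i)) ∧
      (∀ i, X.chainSupp (X.pathChain (σ i)) ⊆ X.chainSupp c) ∧
      c = ∑ i, X.pathChain (σ i) := by
  classical
  intro N
  induction N with
  | zero =>
      intro c hcyc hint hbd
      apply X.zero_decomposition
      by_contra hc
      obtain ⟨e, he⟩ : ∃ e, (c : X.E →₀ ℝ) e ≠ 0 := by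
        by_contra hall
        push_neg at hall
        exact hc (Subtype.ext (Finsupp.ext hall))
      have hmem : e ∈ (c : X.E →₀ ℝ).support := Finsupp.mem_support_iff.2 he
      have h1 : |(c : X.E →₀ ℝ) e| ≤ ∑ f ∈ (c : X.E →₀ ℝ).support, |(c : X.E →₀ ℝ) f| :=
        Finset.single_le_sum (f := fun f => |(c : X.E →₀ ℝ) f|) (fun f _ => abs_nonneg _) hmem
      have h2 : 0 < |(c : X.E →₀ ℝ) e| := abs_pos.2 he
      simp only [Nat.cast_zero] at hbd
      linarith
  | succ N ih =>
      intro c hcyc hint hbd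
      by_cases hc : c = 0
      · exact X.zero_decomposition c hc
      obtain ⟨e', he'⟩ : ∃ e, (c : X.E →₀ ℝ) e ≠ 0 := by
        by_contra hall
        push_neg at hall
        exact hc (Subtype.ext (Finsupp.ext hall))
      -- find an edge with positive coefficient
      obtain ⟨e0, he0⟩ : ∃ e, 0 < (c : X.E →₀ ℝ) e := by
        rcases lt_or_gt_of_ne he' with h | h
        · exact ⟨X.inv e', by rw [X.C1_inv_apply]; linarith⟩
        · exact ⟨e', h⟩
      obtain ⟨x, σ, hσ, hσne, hσP⟩ := X.exists_simple_loop c hcyc he0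
      have hndσ : σ.Nodup := X.simpleLoop_edges_nodup hσ
      have hninv : ∀ f ∈ σ, X.inv f ∉ σ := by
        intro f hf hinvf
        have h1 := hσP f hf
        have h2 := hσP _ hinvf
        rw [X.C1_inv_apply] at h2
        linarith
      set d : ↥X.C1 := X.pathChain σ with hd
      have hdapp : ∀ e, ((d : ↥X.C1) : X.E →₀ ℝ) e =
          if e ∈ σ then 1 else if X.inv e ∈ σ then -1 else 0 :=
        X.pathChain_apply_nodup hndσ hninv
      set c' : ↥X.C1 := c - d with hc'
      have hc'app : ∀ e, ((c' : ↥X.C1) : X.E →₀ ℝ) e =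
          (c : X.E →₀ ℝ) e - ((d : ↥X.C1) : X.E →₀ ℝ) e := by
        intro e
        rw [hc', AddSubgroupClass.coe_sub, Finsupp.sub_apply]
      have hc'cyc : X.IsCycle c' := by
        rw [hc', IsCycle, X.boundary_sub, hcyc, X.boundary_loop hσ.1, sub_zero]
      have hc'int : X.IsIntegral c' := by
        intro e
        obtain ⟨n, hn⟩ := hint e
        refine ⟨n - (if e ∈ σ then 1 else if X.inv e ∈ σ then -1 else 0), ?_⟩
        rw [hc'app, hn, hdapp]
        by_cases h1 : e ∈ σ <;> by_cases h2 : X.inv e ∈ σ <;>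
          simp only [h1, h2, if_true, if_false] <;> push_cast <;> ring
      -- pointwise integrality bounds
      have hge1 : ∀ e ∈ σ, 1 ≤ (c : X.E →₀ ℝ) e := by
        intro e he
        obtain ⟨n, hn⟩ := hint e
        have := hσP e he
        rw [hn] at this ⊢
        have hn1 : (0:ℤ) < n := by exact_mod_cast this
        have hn2 : (1:ℤ) ≤ n := hn1
        exact_mod_cast hn2
      have hle1 : ∀ e, X.inv e ∈ σ → (c : X.E →₀ ℝ) e ≤ -1 := by
        intro e he
        have h1 := hge1 _ he
        rw [X.C1_inv_apply] at h1
        linarith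
      have habs : ∀ e, |((c' : ↥X.C1) : X.E →₀ ℝ) e| ≤ |(c : X.E →₀ ℝ) e| := by
        intro e
        rw [hc'app, hdapp]
        by_cases h1 : e ∈ σ
        · have := hge1 e h1
          rw [if_pos h1, abs_of_nonneg (by linarith), abs_of_nonneg (by linarith)]
          linarith
        · by_cases h2 : X.inv e ∈ σ
          · have := hle1 e h2
            rw [if_neg h1, if_pos h2, abs_of_nonpos (by linarith), abs_of_nonpos (by linarith)]
            linarith
          · rw [if_neg h1, if_neg h2, sub_zero]
      -- head edge of σ
      obtain ⟨e1, σ', he1⟩ : ∃ e1 σ', σ = e1 :: σ' := by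
        cases σ with
        | nil => exact absurd rfl hσne
        | cons a l => exact ⟨a, l, rfl⟩
      have he1mem : e1 ∈ σ := by rw [he1]; exact List.mem_cons_self
      have he1supp : e1 ∈ (c : X.E →₀ ℝ).support :=
        Finsupp.mem_support_iff.2 (ne_of_gt (hσP e1 he1mem))
      have habs1 : |((c' : ↥X.C1) : X.E →₀ ℝ) e1| ≤ |(c : X.E →₀ ℝ) e1| - 1 := by
        have h1 := hge1 e1 he1mem
        rw [hc'app, hdapp, if_pos he1mem, abs_of_nonneg (by linarith : (0:ℝ) ≤ (c : X.E →₀ ℝ) e1 - 1), abs_of_nonneg (by linarith : (0:ℝ) ≤ (c : X.E →₀ ℝ) e1)]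
      -- support inclusion (finsupp supports)
      have hsupp' : (c' : X.E →₀ ℝ).support ⊆ (c : X.E →₀ ℝ).support := by
        intro e he
        rw [Finsupp.mem_support_iff] at he ⊢
        intro h0
        apply he
        rw [hc'app, h0, hdapp]
        have h1 : e ∉ σ := fun h => by have := hge1 e h; rw [h0] at this; linarith
        have h2 : X.inv e ∉ σ := fun h => by have := hle1 e h; rw [h0] at this; linarith
        rw [if_neg h1, if_neg h2]
        ring
      -- chainSupp inclusions
      have hsuppd : X.chainSupp d ⊆ X.chainSupp c := by
        intro e he
        rw [chainSupp, Set.mem_setOf_eq, hdapp] at he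
        by_cases h1 : e ∈ σ
        · exact lt_of_lt_of_le zero_lt_one (hge1 e h1)
        · rw [if_neg h1] at he
          by_cases h2 : X.inv e ∈ σ
          · rw [if_pos h2] at he; exact absurd he (by norm_num)
          · rw [if_neg h2] at he; exact absurd he (by norm_num)
      have hsuppc' : X.chainSupp c' ⊆ X.chainSupp c := by
        intro e he
        rw [chainSupp, Set.mem_setOf_eq] at he ⊢
        rw [hc'app, hdapp] at he
        by_cases h1 : e ∈ σ
        · have := hge1 e h1
          rw [if_pos h1] at he
          linarith
        · by_cases h2 : X.inv e ∈ σ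
          · have := hle1 e h2
            rw [if_neg h1, if_pos h2] at he
            linarith
          · rw [if_neg h1, if_neg h2, sub_zero] at he
            exact he
      -- measure decreases
      have hbd' : (∑ e ∈ (c' : X.E →₀ ℝ).support, |((c' : ↥X.C1) : X.E →₀ ℝ) e|) ≤ (N : ℝ) := by
        have hA : (∑ e ∈ (c' : X.E →₀ ℝ).support, |((c' : ↥X.C1) : X.E →₀ ℝ) e|)
            ≤ ∑ e ∈ (c : X.E →₀ ℝ).support, |((c' : ↥X.C1) : X.E →₀ ℝ) e| :=
          Finset.sum_le_sum_of_subset_of_nonneg hsupp' (fun e _ _ => abs_nonneg _)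
        have hB : ∑ e ∈ ((c : X.E →₀ ℝ).support).erase e1, |((c' : ↥X.C1) : X.E →₀ ℝ) e|
            ≤ ∑ e ∈ ((c : X.E →₀ ℝ).support).erase e1, |(c : X.E →₀ ℝ) e| :=
          Finset.sum_le_sum (fun e _ => habs e)
        have hC := Finset.sum_erase_add ((c : X.E →₀ ℝ).support)
          (fun e => |((c' : ↥X.C1) : X.E →₀ ℝ) e|) he1supp
        have hD := Finset.sum_erase_add ((c : X.E →₀ ℝ).support)
          (fun e => |(c : X.E →₀ ℝ) e|) he1supp
        push_cast at hbd ⊢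
        linarith
      obtain ⟨n, v, σs, hloops, hsupps, hsum⟩ := ih c' hc'cyc hc'int hbd'
      refine ⟨n + 1, Fin.cons x v, Fin.cons (α := fun _ => List X.E) σ σs, ?_, ?_, ?_⟩
      · intro i
        refine Fin.cases ?_ ?_ i
        · simpa using hσ
        · intro j; simpa using hloops j
      · intro i
        refine Fin.cases ?_ ?_ i
        · simpa using hsuppd
        · intro j
          simp only [Fin.cons_succ]
          exact fun e he => hsuppc' (hsupps j he)
      · have hfun : (fun i : Fin (n+1) => X.pathChain (Fin.cons (α := fun _ => List X.E) σ σs i)) =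
            Fin.cons (X.pathChain σ) (fun j => X.pathChain (σs j)) := by
          funext i
          refine Fin.cases ?_ ?_ i
          · simp
          · intro j; simp
        rw [hfun, Fin.sum_cons, ← hsum, hc']
        abel

end SunadaGraph

/-- Lemma: decomposition of integral cycles.  Any integral 1-cycle `c`
can be written as `c = c_{σ₁} + ⋯ + c_{σₙ}` where the `σᵢ` are simple loops with
`supp(c_{σᵢ}) ⊆ supp(c)`. -/
theorem integral_cycle_decomposition (X : SunadaGraph) (c : ↥X.C1)
    (hcyc : X.IsCycle c) (hint : X.IsIntegral c) :
    ∃ (n : ℕ) (v : Fin n → X.V) (σ : Fin n → List X.E),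
      (∀ i, X.IsSimpleLoop (v i) (σ i)) ∧
      (∀ i, X.chainSupp (X.pathChain (σ i)) ⊆ X.chainSupp c) ∧
      c = ∑ i, X.pathChain (σ i) := by
  classical
  exact X.main_induction ⌈∑ e ∈ (c : X.E →₀ ℝ).support, |(c : X.E →₀ ℝ) e|⌉₊ c hcyc hint
    (Nat.le_ceil _)
end
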